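/- There is no bipartite distance-regular graph with diameter 4 whose distinct eigenvalues are exactly {k, 1, 0, -1, -k}, where k is the valency. -/

import Mathlib

/-- A connected graph is distance-regular if for any two vertices `x, y` at distance `i`,
the numbers of neighbours of `y` at distance `i + 1` and `i - 1` from `x` are constants
`b i` and `c i` depending only on `i`. -/
def IsDistanceRegular {V : Type*} (G : SimpleGraph V) : Prop :=
  ∃ b c : ℕ → ℕ, ∀ (i : ℕ) (x y : V), G.dist x y = i →
    {z : V | G.Adj y z ∧ G.dist x z = i + 1}.ncard = b i ∧
    {z : V | G.Adj y z ∧ G.dist x z = i - 1}.ncard = c i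

open Matrix in
private lemma poly_vanish_aux {V : Type*} [Fintype V] [DecidableEq V]
    {A : Matrix V V ℝ} (hsym : A.IsHermitian) {a b : ℝ}
    (h : ∀ i : V, (hsym.eigenvalues i)^5 - a*(hsym.eigenvalues i)^3 + b*(hsym.eigenvalues i) = 0) :
    A^5 - a • A^3 + b • A = 0 := by
  have hst := hsym.spectral_theorem
  rw [Unitary.conjStarAlgAut_apply] at hst
  set U : Matrix V V ℝ := (hsym.eigenvectorUnitary : Matrix V V ℝ) with hU
  set f : V → ℝ := RCLike.ofReal ∘ hsym.eigenvalues with hf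
  set D : Matrix V V ℝ := Matrix.diagonal f with hD
  have hUU : star U * U = 1 := mem_unitaryGroup_iff'.mp hsym.eigenvectorUnitary.2
  have hpow : ∀ m : ℕ, A^(m+1) = U * D^(m+1) * star U := by
    intro m; induction m with
    | zero => simpa using hst
    | succ m ih =>
      rw [pow_succ A (m+1), ih, pow_succ D (m+1), hst]
      simp only [Matrix.mul_assoc]
      have h1 : star U * (U * (D * star U)) = D * star U := by
        rw [← Matrix.mul_assoc, hUU, Matrix.one_mul]
      rw [h1]
  have hDz : D^5 - a • D^3 + b • D = 0 := by
    rw [hD, Matrix.diagonal_pow, Matrix.diagonal_pow]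
    ext i j
    by_cases hij : i = j
    · subst hij
      simp only [Matrix.add_apply, Matrix.sub_apply, Matrix.smul_apply,
        Matrix.diagonal_apply_eq, Pi.pow_apply, Matrix.zero_apply, smul_eq_mul, hf,
        Function.comp_apply, RCLike.ofReal_real_eq_id, id_eq]
      exact h i
    · simp [Matrix.diagonal_apply_ne _ hij]
  have h5 := hpow 4; have h3 := hpow 2; have h1 := hpow 0
  norm_num at h5 h3 h1
  rw [h5, h3, h1]
  have hz : U * (D^5 - a • D^3 + b • D) * star U = 0 := by rw [hDz]; simp
  rw [← hz]
  simp only [Matrix.mul_sub, Matrix.sub_mul, Matrix.mul_add, Matrix.add_mul,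
    Matrix.mul_smul, Matrix.smul_mul, Matrix.mul_assoc]

private lemma sum_split {V : Type*} (s : Finset V) (g : V → ℝ) (p : V → Prop)
    [DecidablePred p] (a : ℝ) (h1 : ∀ z ∈ s, p z → g z = a) :
    ∑ z ∈ s, g z = (s.filter p).card * a + ∑ z ∈ s.filter (fun z => ¬ p z), g z := by
  rw [← Finset.sum_filter_add_sum_filter_not s p g]
  congr 1
  rw [Finset.sum_congr rfl
    (fun z hz => h1 z (Finset.mem_filter.mp hz).1 (Finset.mem_filter.mp hz).2)]
  simp [mul_comm]

private lemma filter_card_eq {V : Type*} [Fintype V] (p q : V → Prop) [DecidablePred p]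
    (hiff : ∀ z, p z ↔ q z) : (Finset.univ.filter p).card = {z | q z}.ncard := by
  classical
  rw [Set.ncard_eq_toFinset_card', Set.toFinset_setOf]
  congr 1
  ext z
  simp [hiff z]

set_option maxHeartbeats 1000000 in
open Matrix in
theorem no_bipartite_drg_diam_four_with_eigenvalues
    {V : Type*} [Fintype V] [DecidableEq V]
    (G : SimpleGraph V) [DecidableRel G.Adj] (k : ℕ)
    (hconn : G.Connected) (hreg : G.IsRegularOfDegree k)
    (hdrg : IsDistanceRegular G)
    (P : Set V)
    (hP : ∀ x ∈ P, ∀ y ∈ P, ¬ G.Adj x y)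
    (hPc : ∀ x ∉ P, ∀ y ∉ P, ¬ G.Adj x y)
    (hdiam : (∀ u v : V, G.dist u v ≤ 4) ∧ ∃ u v : V, G.dist u v = 4)
    (hspec : {μ : ℝ | ∃ v : V → ℝ, v ≠ 0 ∧ G.adjMatrix ℝ *ᵥ v = μ • v} =
      {(k : ℝ), 1, 0, -1, -(k : ℝ)}) :
    False := by
  classical
  obtain ⟨hdiam4, u, v4, huv⟩ := hdiam
  obtain ⟨b, c, hbc⟩ := hdrg
  have hreach : ∀ x y : V, G.Reachable x y := fun x y => hconn.preconnected x y
  have adj_dist_le : ∀ {x y z : V}, G.Adj y z → G.dist x z ≤ G.dist x y + 1 := by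
    intro x y z h
    have ht := hconn.dist_triangle (u := x) (v := y) (w := z)
    have h1 : G.dist y z = 1 := SimpleGraph.dist_eq_one_iff_adj.mpr h
    omega
  have step : ∀ (n : ℕ) (x z : V), G.dist x z = n + 1 → ∃ y, G.Adj y z ∧ G.dist x y = n := by
    intro n x z hxz
    obtain ⟨p, hp⟩ := (hreach x z).exists_walk_length_eq_dist
    cases hq : p.reverse with
    | nil =>
      have h2 := congrArg SimpleGraph.Walk.length hq
      rw [SimpleGraph.Walk.length_reverse, hp, hxz] at h2
      simp at h2
    | @cons _ y _ hadj r =>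
      have hlen : r.length = n := by
        have h2 := congrArg SimpleGraph.Walk.length hq
        rw [SimpleGraph.Walk.length_reverse, hp, hxz] at h2
        simp [SimpleGraph.Walk.length_cons] at h2
        omega
      have hle : G.dist x y ≤ n := by
        have h3 := SimpleGraph.dist_le r.reverse
        rwa [SimpleGraph.Walk.length_reverse, hlen] at h3
      have hge : n ≤ G.dist x y := by
        have h4 := adj_dist_le (x := x) hadj.symm
        omega
      exact ⟨y, hadj.symm, le_antisymm hle hge⟩
  have adj_iff : ∀ {x y : V}, G.Adj x y → (x ∈ P ↔ y ∉ P) := by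
    intro x y h
    constructor
    · intro hx hy; exact hP x hx y hy h
    · intro hy; by_contra hx; exact hPc x hx y hy h
  have parity : ∀ (n : ℕ) (x z : V), G.dist x z = n → ((x ∈ P ↔ z ∈ P) ↔ Even n) := by
    intro n
    induction n with
    | zero =>
      intro x z h
      have hxz : x = z := (hconn.dist_eq_zero_iff).mp h
      subst hxz
      simp
    | succ n ih =>
      intro x z h
      obtain ⟨y, hyz, hy⟩ := step n x z h
      have h1 := ih x y hy
      have h2 := adj_iff hyz
      rw [Nat.even_add_one]
      tauto
  obtain ⟨y3, hy3v, hy3⟩ := step 3 u v4 huv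
  obtain ⟨y2, hy2y3, hy2⟩ := step 2 u y3 hy3
  obtain ⟨y1, hy1y2, hy1⟩ := step 1 u y2 hy2
  have hk1 : 1 ≤ k := by
    have hm : v4 ∈ G.neighborFinset y3 := by simpa [SimpleGraph.mem_neighborFinset] using hy3v
    have := Finset.card_pos.mpr ⟨v4, hm⟩
    have hd : (G.neighborFinset y3).card = k := hreg y3
    omega
  -- ===== matrix entry lemmas =====
  have hA2self : ∀ x : V, (G.adjMatrix ℝ * G.adjMatrix ℝ) x x = (k:ℝ) := by
    intro x
    rw [SimpleGraph.adjMatrix_mul_self_apply_self]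
    exact_mod_cast congrArg (Nat.cast : ℕ → ℝ) (hreg x)
  have hA2_two : ∀ x z : V, G.dist x z = 2 → (G.adjMatrix ℝ * G.adjMatrix ℝ) x z = (c 2 : ℝ) := by
    intro x z hxz
    rw [SimpleGraph.mul_adjMatrix_apply]
    rw [sum_split (G.neighborFinset z) _ (fun w => G.dist x w = 1) 1 ?h1]
    case h1 =>
      intro w _ hw
      simp [SimpleGraph.adjMatrix_apply, SimpleGraph.dist_eq_one_iff_adj.mp hw]
    have hz : ∑ w ∈ (G.neighborFinset z).filter (fun w => ¬ G.dist x w = 1),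
        (G.adjMatrix ℝ) x w = 0 := by
      apply Finset.sum_eq_zero
      intro w hw
      obtain ⟨_, hw2⟩ := Finset.mem_filter.mp hw
      simp only [SimpleGraph.adjMatrix_apply, ite_eq_right_iff]
      intro hadj
      exact absurd (SimpleGraph.dist_eq_one_iff_adj.mpr hadj) hw2
    rw [hz, add_zero, mul_one]
    have hcard : ((G.neighborFinset z).filter (fun w => G.dist x w = 1)).card = c 2 := by
      have he : (G.neighborFinset z).filter (fun w => G.dist x w = 1)
          = Finset.univ.filter (fun w => G.Adj z w ∧ G.dist x w = 1) := by
        ext w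
        simp [SimpleGraph.mem_neighborFinset]
      rw [he, filter_card_eq _ (fun w => G.Adj z w ∧ G.dist x w = 1) (fun _ => Iff.rfl)]
      simpa using (hbc 2 x z hxz).2
    rw [hcard]
  have hA2_zero : ∀ x z : V, G.dist x z ≠ 0 → G.dist x z ≠ 2 →
      (G.adjMatrix ℝ * G.adjMatrix ℝ) x z = 0 := by
    intro x z h0 h2
    rw [SimpleGraph.mul_adjMatrix_apply]
    apply Finset.sum_eq_zero
    intro w hw
    have hzw : G.Adj z w := by simpa [SimpleGraph.mem_neighborFinset] using hw
    simp only [SimpleGraph.adjMatrix_apply, ite_eq_right_iff]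
    intro hxw
    exfalso
    have hle : G.dist x z ≤ 2 := by
      have := adj_dist_le (x := x) (y := w) hzw.symm
      have h1 : G.dist x w = 1 := SimpleGraph.dist_eq_one_iff_adj.mpr hxw
      omega
    have heven : Even (G.dist x z) := by
      have p1 := adj_iff hxw
      have p2 := adj_iff hzw
      have p3 := parity (G.dist x z) x z rfl
      tauto
    obtain ⟨m, hm⟩ := heven
    omega
  have dist_ne_zero : ∀ {x z : V}, x ≠ z → G.dist x z ≠ 0 := by
    intro x z hne h0
    exact hne ((hconn.dist_eq_zero_iff).mp h0)
  -- A³ at distance 1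
  have hA3_one : ∀ x y : V, G.dist x y = 1 →
      (G.adjMatrix ℝ * G.adjMatrix ℝ * G.adjMatrix ℝ) x y
        = (k:ℝ) + ((k:ℝ) - 1) * (c 2 : ℝ) := by
    intro x y hxy
    have hyx : G.Adj y x := (SimpleGraph.dist_eq_one_iff_adj.mp hxy).symm
    have dichot1 : ∀ z : V, G.Adj y z → z ≠ x → G.dist x z = 2 := by
      intro z hyz hzx
      have hle : G.dist x z ≤ 2 := by
        have := adj_dist_le (x := x) hyz
        omega
      have heven : Even (G.dist x z) := by
        have p1 := adj_iff hyx
        have p2 := adj_iff hyz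
        have p3 := parity (G.dist x z) x z rfl
        tauto
      have hne := dist_ne_zero (Ne.symm hzx)
      obtain ⟨m, hm⟩ := heven
      omega
    rw [SimpleGraph.mul_adjMatrix_apply]
    rw [sum_split (G.neighborFinset y) _ (fun z => z = x) (k:ℝ) ?h1]
    case h1 =>
      intro z _ hz
      rw [hz]; exact hA2self x
    have hsplit2 : ∑ z ∈ (G.neighborFinset y).filter (fun z => ¬ z = x),
        (G.adjMatrix ℝ * G.adjMatrix ℝ) x z
        = (((G.neighborFinset y).filter (fun z => ¬ z = x)).card : ℝ) * (c 2 : ℝ) := by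
      rw [sum_split _ _ (fun z => G.dist x z = 2) (c 2 : ℝ) ?h2]
      case h2 =>
        intro z _ hz
        exact hA2_two x z hz
      have hz0 : ∑ z ∈ (((G.neighborFinset y).filter (fun z => ¬ z = x)).filter
          (fun z => ¬ G.dist x z = 2)), (G.adjMatrix ℝ * G.adjMatrix ℝ) x z = 0 := by
        apply Finset.sum_eq_zero
        intro z hz
        simp only [Finset.mem_filter, SimpleGraph.mem_neighborFinset] at hz
        exact absurd (dichot1 z hz.1.1 hz.1.2) hz.2
      rw [hz0, add_zero]
      have hfe : ((G.neighborFinset y).filter (fun z => ¬ z = x)).filter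
          (fun z => G.dist x z = 2) = (G.neighborFinset y).filter (fun z => ¬ z = x) := by
        ext z
        simp only [Finset.mem_filter, SimpleGraph.mem_neighborFinset]
        constructor
        · rintro ⟨⟨h1, h2⟩, _⟩; exact ⟨h1, h2⟩
        · rintro ⟨h1, h2⟩; exact ⟨⟨h1, h2⟩, dichot1 z h1 h2⟩
      rw [hfe]
    rw [hsplit2]
    have hc1 : ((G.neighborFinset y).filter (fun z => z = x)).card = 1 := by
      have : (G.neighborFinset y).filter (fun z => z = x) = {x} := by
        ext z
        simp only [Finset.mem_filter, SimpleGraph.mem_neighborFinset, Finset.mem_singleton]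
        exact ⟨fun h => h.2, fun h => ⟨h ▸ hyx, h⟩⟩
      rw [this, Finset.card_singleton]
    have hck : ((G.neighborFinset y).filter (fun z => ¬ z = x)).card = k - 1 := by
      have : (G.neighborFinset y).filter (fun z => ¬ z = x) = (G.neighborFinset y).erase x := by
        ext z
        simp only [Finset.mem_filter, Finset.mem_erase, SimpleGraph.mem_neighborFinset]
        tauto
      rw [this, Finset.card_erase_of_mem (by simpa [SimpleGraph.mem_neighborFinset] using hyx), show (G.neighborFinset y).card = k from hreg y]
    rw [hc1, hck, Nat.cast_sub hk1]
    push_cast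
    ring
  -- A³ at distance 3
  have hA3_three : ∀ x y : V, G.dist x y = 3 →
      (G.adjMatrix ℝ * G.adjMatrix ℝ * G.adjMatrix ℝ) x y = (c 2 : ℝ) * (c 3 : ℝ) := by
    intro x y hxy
    rw [SimpleGraph.mul_adjMatrix_apply]
    rw [sum_split (G.neighborFinset y) _ (fun z => G.dist x z = 2) (c 2 : ℝ) ?h1]
    case h1 =>
      intro z _ hz
      exact hA2_two x z hz
    have hz0 : ∑ z ∈ (G.neighborFinset y).filter (fun z => ¬ G.dist x z = 2),
        (G.adjMatrix ℝ * G.adjMatrix ℝ) x z = 0 := by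
      apply Finset.sum_eq_zero
      intro z hz
      obtain ⟨hz1, hz2⟩ := Finset.mem_filter.mp hz
      have hyz : G.Adj y z := by simpa [SimpleGraph.mem_neighborFinset] using hz1
      apply hA2_zero x z ?_ hz2
      intro h0
      have hzx : x = z := (hconn.dist_eq_zero_iff).mp h0
      subst hzx
      have : G.dist x y = 1 := SimpleGraph.dist_eq_one_iff_adj.mpr hyz.symm
      omega
    rw [hz0, add_zero]
    have hcard : ((G.neighborFinset y).filter (fun z => G.dist x z = 2)).card = c 3 := by
      have he : (G.neighborFinset y).filter (fun z => G.dist x z = 2)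
          = Finset.univ.filter (fun z => G.Adj y z ∧ G.dist x z = 2) := by
        ext z
        simp [SimpleGraph.mem_neighborFinset]
      rw [he, filter_card_eq _ (fun z => G.Adj y z ∧ G.dist x z = 2) (fun _ => Iff.rfl)]
      simpa using (hbc 3 x y hxy).2
    rw [hcard]
    ring
  -- row sums
  have rowA : ∀ w : V, ∑ z, (G.adjMatrix ℝ) w z = (k:ℝ) := by
    intro w
    have h1 : ∑ z, (G.adjMatrix ℝ) w z = ((Finset.univ.filter (G.Adj w)).card : ℝ) := by
      simp [SimpleGraph.adjMatrix_apply, Finset.sum_boole]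
    rw [h1, ← SimpleGraph.neighborFinset_eq_filter]
    exact_mod_cast congrArg (Nat.cast : ℕ → ℝ) (hreg w)
  have row2 : ∑ z, (G.adjMatrix ℝ * G.adjMatrix ℝ) u z = (k:ℝ) * (k:ℝ) := by
    simp only [Matrix.mul_apply]
    rw [Finset.sum_comm]
    have h1 : ∀ w : V, ∑ z, (G.adjMatrix ℝ) u w * (G.adjMatrix ℝ) w z
        = (G.adjMatrix ℝ) u w * (k:ℝ) := by
      intro w
      rw [← Finset.mul_sum, rowA w]
    rw [Finset.sum_congr rfl (fun w _ => h1 w), ← Finset.sum_mul, rowA u]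
  -- K2 equation
  have hdecomp : ∑ z, (G.adjMatrix ℝ * G.adjMatrix ℝ) u z
      = (k:ℝ) + ((Finset.univ.filter (fun z => G.dist u z = 2)).card : ℝ) * (c 2 : ℝ) := by
    rw [sum_split Finset.univ _ (fun z => z = u) (k:ℝ)
      (fun z _ hz => by rw [hz]; exact hA2self u)]
    rw [sum_split _ _ (fun z => G.dist u z = 2) (c 2 : ℝ) (fun z _ hz => hA2_two u z hz)]
    have h0 : ∑ z ∈ ((Finset.univ.filter (fun z : V => ¬ z = u)).filter
        (fun z => ¬ G.dist u z = 2)), (G.adjMatrix ℝ * G.adjMatrix ℝ) u z = 0 := by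
      apply Finset.sum_eq_zero
      intro z hz
      simp only [Finset.mem_filter, Finset.mem_univ, true_and] at hz
      exact hA2_zero u z (fun h0 => hz.1 ((hconn.dist_eq_zero_iff).mp h0).symm) hz.2
    rw [h0, add_zero]
    have hfeq : (Finset.univ.filter (fun z : V => ¬ z = u)).filter (fun z => G.dist u z = 2)
        = Finset.univ.filter (fun z => G.dist u z = 2) := by
      ext z
      simp only [Finset.mem_filter, Finset.mem_univ, true_and]
      constructor
      · rintro ⟨_, h⟩; exact h
      · intro h
        refine ⟨fun he => ?_, h⟩
        rw [he, SimpleGraph.dist_self] at h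
        omega
    rw [hfeq]
    have hc1 : (Finset.univ.filter (fun z : V => z = u)).card = 1 := by
      have : (Finset.univ.filter (fun z : V => z = u)) = {u} := by
        ext z; simp
      rw [this, Finset.card_singleton]
    rw [hc1]
    push_cast
    ring
  have hK2eq : (k:ℝ) + ((Finset.univ.filter (fun z => G.dist u z = 2)).card : ℝ) * (c 2 : ℝ)
      = (k:ℝ) * (k:ℝ) := by rw [← hdecomp]; exact row2
  -- dichotomy for distance-2 vertices
  have dichotz : ∀ z : V, G.dist u z = 2 → G.dist z y3 = 1 ∨ G.dist z y3 = 3 := by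
    intro z hz
    have hle : G.dist z y3 ≤ 4 := hdiam4 z y3
    have hodd : ¬ Even (G.dist z y3) := by
      have p1 := parity 2 u z hz
      have p2 := parity 3 u y3 hy3
      have p3 := parity (G.dist z y3) z y3 rfl
      have e2 : Even 2 := by decide
      have e3 : ¬ Even 3 := by decide
      tauto
    rw [Nat.not_even_iff] at hodd
    omega
  -- the A^5 entry computation
  have hA5 : (G.adjMatrix ℝ * G.adjMatrix ℝ * (G.adjMatrix ℝ * G.adjMatrix ℝ * G.adjMatrix ℝ)) u y3
      = (k:ℝ) * ((c 2 : ℝ) * (c 3 : ℝ))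
        + ((Finset.univ.filter (fun z => G.dist u z = 2 ∧ G.dist z y3 = 1)).card : ℝ)
            * ((c 2 : ℝ) * ((k:ℝ) + ((k:ℝ) - 1) * (c 2 : ℝ)))
        + ((Finset.univ.filter (fun z => G.dist u z = 2 ∧ G.dist z y3 = 3)).card : ℝ)
            * ((c 2 : ℝ) * ((c 2 : ℝ) * (c 3 : ℝ))) := by
    rw [Matrix.mul_apply]
    rw [sum_split Finset.univ _ (fun z => z = u) ((k:ℝ) * ((c 2 : ℝ) * (c 3 : ℝ)))
      (fun z _ hz => by rw [hz, hA2self u, hA3_three u y3 hy3])]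
    rw [sum_split _ _ (fun z => G.dist u z = 2 ∧ G.dist z y3 = 1)
      ((c 2 : ℝ) * ((k:ℝ) + ((k:ℝ) - 1) * (c 2 : ℝ)))
      (fun z _ hz => by rw [hA2_two u z hz.1, hA3_one z y3 hz.2])]
    rw [sum_split _ _ (fun z => G.dist u z = 2 ∧ G.dist z y3 = 3)
      ((c 2 : ℝ) * ((c 2 : ℝ) * (c 3 : ℝ)))
      (fun z _ hz => by rw [hA2_two u z hz.1, hA3_three z y3 hz.2])]
    have h0 : ∑ z ∈ (((Finset.univ.filter (fun z : V => ¬ z = u)).filter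
        (fun z => ¬ (G.dist u z = 2 ∧ G.dist z y3 = 1))).filter
        (fun z => ¬ (G.dist u z = 2 ∧ G.dist z y3 = 3))),
        ((G.adjMatrix ℝ * G.adjMatrix ℝ) u z
          * (G.adjMatrix ℝ * G.adjMatrix ℝ * G.adjMatrix ℝ) z y3) = 0 := by
      apply Finset.sum_eq_zero
      intro z hz
      simp only [Finset.mem_filter, Finset.mem_univ, true_and] at hz
      obtain ⟨⟨hz1, hz2⟩, hz3⟩ := hz
      by_cases hd : G.dist u z = 2
      · rcases dichotz z hd with h | h
        · exact absurd ⟨hd, h⟩ hz2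
        · exact absurd ⟨hd, h⟩ hz3
      · rw [hA2_zero u z (fun h0 => hz1 ((hconn.dist_eq_zero_iff).mp h0).symm) hd, zero_mul]
    rw [h0, add_zero]
    have hq1 : ((Finset.univ.filter (fun z : V => ¬ z = u)).filter
        (fun z => G.dist u z = 2 ∧ G.dist z y3 = 1))
        = Finset.univ.filter (fun z => G.dist u z = 2 ∧ G.dist z y3 = 1) := by
      ext z
      simp only [Finset.mem_filter, Finset.mem_univ, true_and]
      constructor
      · rintro ⟨_, h⟩; exact h
      · intro h
        refine ⟨fun he => ?_, h⟩
        rw [he, SimpleGraph.dist_self] at h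
        omega
    have hq2 : (((Finset.univ.filter (fun z : V => ¬ z = u)).filter
        (fun z => ¬ (G.dist u z = 2 ∧ G.dist z y3 = 1))).filter
        (fun z => G.dist u z = 2 ∧ G.dist z y3 = 3))
        = Finset.univ.filter (fun z => G.dist u z = 2 ∧ G.dist z y3 = 3) := by
      ext z
      simp only [Finset.mem_filter, Finset.mem_univ, true_and]
      constructor
      · rintro ⟨_, h⟩; exact h
      · intro h
        refine ⟨⟨fun he => ?_, fun hc => ?_⟩, h⟩
        · rw [he, SimpleGraph.dist_self] at h
          omega
        · have := hc.2
          have := h.2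
          omega
    rw [hq1, hq2]
    have hc1 : (Finset.univ.filter (fun z : V => z = u)).card = 1 := by
      have : (Finset.univ.filter (fun z : V => z = u)) = {u} := by
        ext z; simp
      rw [this, Finset.card_singleton]
    rw [hc1]
    push_cast
    ring
  -- card of filter q = c 3
  have hcq : ((Finset.univ.filter (fun z => G.dist u z = 2 ∧ G.dist z y3 = 1)).card : ℕ)
      = c 3 := by
    rw [filter_card_eq _ (fun z => G.Adj y3 z ∧ G.dist u z = 2) ?_]
    · simpa using (hbc 3 u y3 hy3).2
    · intro z
      constructor
      · rintro ⟨h1, h2⟩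
        exact ⟨(SimpleGraph.dist_eq_one_iff_adj.mp h2).symm, h1⟩
      · rintro ⟨h1, h2⟩
        exact ⟨h2, SimpleGraph.dist_eq_one_iff_adj.mpr h1.symm⟩
  -- partition
  have hpart : (Finset.univ.filter (fun z => G.dist u z = 2 ∧ G.dist z y3 = 1)).card
      + (Finset.univ.filter (fun z => G.dist u z = 2 ∧ G.dist z y3 = 3)).card
      = (Finset.univ.filter (fun z => G.dist u z = 2)).card := by
    have e1 : Finset.univ.filter (fun z => G.dist u z = 2 ∧ G.dist z y3 = 1)
        = (Finset.univ.filter (fun z => G.dist u z = 2)).filter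
            (fun z => G.dist z y3 = 1) := by
      ext z
      simp only [Finset.mem_filter, Finset.mem_univ, true_and]
    have e2 : Finset.univ.filter (fun z => G.dist u z = 2 ∧ G.dist z y3 = 3)
        = (Finset.univ.filter (fun z => G.dist u z = 2)).filter
            (fun z => ¬ G.dist z y3 = 1) := by
      ext z
      simp only [Finset.mem_filter, Finset.mem_univ, true_and]
      constructor
      · rintro ⟨h1, h2⟩
        exact ⟨h1, by omega⟩
      · rintro ⟨h1, h2⟩
        rcases dichotz z h1 with h | h
        · exact absurd h h2
        · exact ⟨h1, h⟩
    rw [e1, e2, Finset.card_filter_add_card_filter_not]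
  -- spectral identity
  have hsym : (G.adjMatrix ℝ).IsHermitian := by
    show (G.adjMatrix ℝ)ᴴ = G.adjMatrix ℝ
    ext i j
    simp [Matrix.conjTranspose_apply, SimpleGraph.adjMatrix_apply, SimpleGraph.adj_comm]
  have heval : ∀ i : V, (hsym.eigenvalues i)^5 - ((k:ℝ)^2+1)*(hsym.eigenvalues i)^3
      + ((k:ℝ)^2)*(hsym.eigenvalues i) = 0 := by
    intro i
    have hmem : hsym.eigenvalues i ∈
        {μ : ℝ | ∃ v : V → ℝ, v ≠ 0 ∧ G.adjMatrix ℝ *ᵥ v = μ • v} := by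
      refine ⟨⇑(hsym.eigenvectorBasis i), ?_, hsym.mulVec_eigenvectorBasis i⟩
      intro h0
      exact hsym.eigenvectorBasis.orthonormal.ne_zero i (by ext j; exact congrFun h0 j)
    rw [hspec] at hmem
    simp only [Set.mem_insert_iff, Set.mem_singleton_iff] at hmem
    rcases hmem with h | h | h | h | h <;> rw [h] <;> ring
  have hzero := poly_vanish_aux hsym heval
  have hpow5 : (G.adjMatrix ℝ)^5
      = G.adjMatrix ℝ * G.adjMatrix ℝ * (G.adjMatrix ℝ * G.adjMatrix ℝ * G.adjMatrix ℝ) := by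
    rw [show (5:ℕ) = 2 + 3 by norm_num, pow_add, show (3:ℕ) = 2 + 1 by norm_num, pow_add,
      pow_two, pow_one]
  have hpow3 : (G.adjMatrix ℝ)^3 = G.adjMatrix ℝ * G.adjMatrix ℝ * G.adjMatrix ℝ := by
    rw [show (3:ℕ) = 2 + 1 by norm_num, pow_add, pow_two, pow_one]
  have hEntry : (G.adjMatrix ℝ * G.adjMatrix ℝ
        * (G.adjMatrix ℝ * G.adjMatrix ℝ * G.adjMatrix ℝ)) u y3
      = ((k:ℝ)^2+1) * ((G.adjMatrix ℝ * G.adjMatrix ℝ * G.adjMatrix ℝ) u y3)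
        - (k:ℝ)^2 * ((G.adjMatrix ℝ) u y3) := by
    have h0 : ((G.adjMatrix ℝ)^5 - ((k:ℝ)^2+1) • (G.adjMatrix ℝ)^3
        + ((k:ℝ)^2) • (G.adjMatrix ℝ)) u y3 = (0 : Matrix V V ℝ) u y3 := by rw [hzero]
    rw [hpow5, hpow3] at h0
    simp only [Matrix.sub_apply, Matrix.add_apply, Matrix.smul_apply, Matrix.zero_apply,
      smul_eq_mul] at h0
    linarith
  have hAuy3 : (G.adjMatrix ℝ) u y3 = 0 := by
    simp only [SimpleGraph.adjMatrix_apply, ite_eq_right_iff]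
    intro hadj
    exfalso
    have h1 : G.dist u y3 = 1 := SimpleGraph.dist_eq_one_iff_adj.mpr hadj
    omega
  -- positivity and bounds
  have hc2pos : 1 ≤ c 2 := by
    have hcc : (Finset.univ.filter (fun z => G.Adj y2 z ∧ G.dist u z = 1)).card = c 2 := by
      rw [filter_card_eq _ (fun z => G.Adj y2 z ∧ G.dist u z = 1) (fun _ => Iff.rfl)]
      simpa using (hbc 2 u y2 hy2).2
    have hmem : y1 ∈ Finset.univ.filter (fun z => G.Adj y2 z ∧ G.dist u z = 1) := by
      simp only [Finset.mem_filter, Finset.mem_univ, true_and]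
      exact ⟨hy1y2.symm, hy1⟩
    have := Finset.card_pos.mpr ⟨y1, hmem⟩
    omega
  have hc3pos : 1 ≤ c 3 := by
    have hcc : (Finset.univ.filter (fun z => G.Adj y3 z ∧ G.dist u z = 2)).card = c 3 := by
      rw [filter_card_eq _ (fun z => G.Adj y3 z ∧ G.dist u z = 2) (fun _ => Iff.rfl)]
      simpa using (hbc 3 u y3 hy3).2
    have hmem : y2 ∈ Finset.univ.filter (fun z => G.Adj y3 z ∧ G.dist u z = 2) := by
      simp only [Finset.mem_filter, Finset.mem_univ, true_and]
      exact ⟨hy2y3.symm, hy2⟩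
    have := Finset.card_pos.mpr ⟨y2, hmem⟩
    omega
  have hc3k : c 3 + 1 ≤ k := by
    have hcc : (Finset.univ.filter (fun z => G.Adj y3 z ∧ G.dist u z = 2)).card = c 3 := by
      rw [filter_card_eq _ (fun z => G.Adj y3 z ∧ G.dist u z = 2) (fun _ => Iff.rfl)]
      simpa using (hbc 3 u y3 hy3).2
    have hsub : insert v4 (Finset.univ.filter (fun z => G.Adj y3 z ∧ G.dist u z = 2))
        ⊆ G.neighborFinset y3 := by
      intro z hz
      rcases Finset.mem_insert.mp hz with h | h
      · subst h
        simpa [SimpleGraph.mem_neighborFinset] using hy3v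
      · simp only [Finset.mem_filter, Finset.mem_univ, true_and] at h
        simpa [SimpleGraph.mem_neighborFinset] using h.1
    have hv4 : v4 ∉ Finset.univ.filter (fun z => G.Adj y3 z ∧ G.dist u z = 2) := by
      simp only [Finset.mem_filter, Finset.mem_univ, true_and, not_and]
      intro _
      omega
    have hle := Finset.card_le_card hsub
    rw [Finset.card_insert_of_notMem hv4, hcc,
      show (G.neighborFinset y3).card = k from hreg y3] at hle
    omega
  -- final contradiction over ℝ
  have hE : (k:ℝ) * ((c 2 : ℝ) * (c 3 : ℝ))
      + (c 3 : ℝ) * ((c 2 : ℝ) * ((k:ℝ) + ((k:ℝ) - 1) * (c 2 : ℝ)))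
      + ((Finset.univ.filter (fun z => G.dist u z = 2 ∧ G.dist z y3 = 3)).card : ℝ)
          * ((c 2 : ℝ) * ((c 2 : ℝ) * (c 3 : ℝ)))
      = ((k:ℝ)^2+1) * ((c 2 : ℝ) * (c 3 : ℝ)) := by
    have h1 := hA5.symm.trans hEntry
    rw [hA3_three u y3 hy3, hAuy3, hcq] at h1
    linarith
  set rr : ℝ := (k : ℝ) with hrr
  set pp : ℝ := (c 2 : ℝ) with hpp
  set qq : ℝ := (c 3 : ℝ) with hqq
  set NN : ℝ := ((Finset.univ.filter (fun z => G.dist u z = 2 ∧ G.dist z y3 = 3)).card : ℝ)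
    with hNN
  set KK : ℝ := ((Finset.univ.filter (fun z => G.dist u z = 2)).card : ℝ) with hKK
  have hNKq : qq + NN = KK := by
    rw [hqq, hNN, hKK, ← hcq]
    exact_mod_cast congrArg (Nat.cast : ℕ → ℝ) hpart
  have hppos : (1:ℝ) ≤ pp := by rw [hpp]; exact_mod_cast hc2pos
  have hqpos : (1:ℝ) ≤ qq := by rw [hqq]; exact_mod_cast hc3pos
  have hqk : qq + 1 ≤ rr := by rw [hqq, hrr]; exact_mod_cast hc3k
  have hpq0 : (0:ℝ) < pp * qq := by nlinarith
  have hE' : pp * qq * (rr + (rr + (rr - 1) * pp) + (KK - qq) * pp)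
      = pp * qq * (rr^2 + 1) := by
    have hN : NN = KK - qq := by linarith
    rw [hN] at hE
    linear_combination hE
  have hb : rr + (rr + (rr - 1) * pp) + (KK - qq) * pp = rr^2 + 1 :=
    mul_left_cancel₀ (ne_of_gt hpq0) hE'
  have hK2eq' : rr + KK * pp = rr * rr := hK2eq
  have hfin : pp * qq = (rr - 1) * (pp + 1) := by linear_combination hK2eq' - hb
  have hmul : pp * qq ≤ pp * (rr - 1) :=
    mul_le_mul_of_nonneg_left (by linarith) (by linarith)
  nlinarith [hfin, hmul, hppos, hqpos, hqk]
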